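/- Let Ω ⊂ ℝ³ be bounded with Lipschitz boundary, and consider E[Q] = ∫_Ω [½|∇Q|² + λ² F̄_b(Q)] dx on H₀¹(Ω; S₀), where F̄_b(Q) = (A/2C)tr Q² − (B/3C)tr Q³ + (1/4)(tr Q²)². Fix M > 0 and let X = {Q ∈ H₀¹(Ω; S₀) : ‖Q‖_{L∞} ≤ M}. Then the second-order central difference satisfies Δ(Q,h) := E[Q+h] + E[Q−h] − 2E[Q] ≥ ∫_Ω |∇h|² dx − λ²(|A|/C + 2BM/C) ∫_Ω |h|² dx for all Q ∈ X and h ∈ H₀¹(Ω; S₀). -/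

import Mathlib

open MeasureTheory

/-- The reduced LdG bulk density `F̄_b(Q) = (A/2C)tr Q² − (B/3C)tr Q³ + (1/4)(tr Q²)²`. -/
noncomputable def Fbred (A B C : ℝ) (Q : Matrix (Fin 3) (Fin 3) ℝ) : ℝ :=
  A / (2 * C) * (Q * Q).trace - B / (3 * C) * (Q * Q * Q).trace
    + (1 / 4) * (Q * Q).trace ^ 2

/-- `|∇Q|² = Σ_{k,i,j} |∂_k Q^{ij}|²`. -/
noncomputable def gradsq (Qf : (Fin 3 → ℝ) → Matrix (Fin 3) (Fin 3) ℝ)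
    (x : Fin 3 → ℝ) : ℝ :=
  ∑ k : Fin 3, ∑ i : Fin 3, ∑ j : Fin 3,
    (fderiv ℝ (fun y => Qf y i j) x (Pi.single k 1)) ^ 2

/-- The energy `E[Q] = ∫_Ω [½|∇Q|² + λ² F̄_b(Q)] dx`. -/
noncomputable def Eldg (Ω : Set (Fin 3 → ℝ)) (lam A B C : ℝ)
    (Qf : (Fin 3 → ℝ) → Matrix (Fin 3) (Fin 3) ℝ) : ℝ :=
  ∫ x in Ω, ((1 / 2) * gradsq Qf x + lam ^ 2 * Fbred A B C (Qf x))


open Matrix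

abbrev M3 := Matrix (Fin 3) (Fin 3) ℝ

lemma sq_expand (Q h : M3) : ((Q+h)*(Q+h)).trace = (Q*Q).trace + 2*(Q*h).trace + (h*h).trace := by
  simp [Matrix.add_mul, Matrix.mul_add, Matrix.trace_add, Matrix.trace_mul_comm h Q]; ring

lemma sq_expand' (Q h : M3) : ((Q-h)*(Q-h)).trace = (Q*Q).trace - 2*(Q*h).trace + (h*h).trace := by
  simp [Matrix.sub_mul, Matrix.mul_sub, Matrix.trace_sub, Matrix.trace_mul_comm h Q]; ring

lemma cube_expand (Q h : M3) : ((Q+h)*(Q+h)*(Q+h)).trace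
    = (Q*Q*Q).trace + 3*(Q*Q*h).trace + 3*(Q*(h*h)).trace + (h*h*h).trace := by
  simp only [Matrix.add_mul, Matrix.mul_add, Matrix.trace_add]
  rw [Matrix.trace_mul_cycle h Q h, Matrix.trace_mul_cycle Q h Q, ← Matrix.trace_mul_cycle Q Q h,
    Matrix.trace_mul_cycle h h Q,
    Matrix.mul_assoc Q h h]
  ring

lemma cube_expand' (Q h : M3) : ((Q-h)*(Q-h)*(Q-h)).trace
    = (Q*Q*Q).trace - 3*(Q*Q*h).trace + 3*(Q*(h*h)).trace - (h*h*h).trace := by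
  have := cube_expand Q (-h)
  simpa [sub_eq_add_neg, Matrix.neg_mul, Matrix.mul_neg] using this

lemma Fbred_cdiff (A B C : ℝ) (Q h : M3) :
    Fbred A B C (Q+h) + Fbred A B C (Q-h) - 2 * Fbred A B C Q
    = A / C * (h*h).trace - 2*B/C * (Q*(h*h)).trace + 2*(Q*h).trace^2
      + (Q*Q).trace * (h*h).trace + (1/2) * (h*h).trace^2 := by
  simp only [Fbred, sq_expand, sq_expand', cube_expand, cube_expand']
  field_simp
  ring

lemma trace_sq_eq (Q : M3) (hs : Q.IsSymm) : (Q*Q).trace = ∑ i, ∑ j, (Q i j)^2 := by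
  simp [Matrix.trace, Matrix.mul_apply, Matrix.diag]
  exact Finset.sum_congr rfl fun i _ => Finset.sum_congr rfl fun j _ => by
    rw [hs.apply i j]; ring

lemma trace_sq_nonneg (Q : M3) (hs : Q.IsSymm) : 0 ≤ (Q*Q).trace := by
  rw [trace_sq_eq Q hs]
  positivity

lemma trace_mul_symm_eq (Q S : M3) (hS : S.IsSymm) :
    (Q*S).trace = ∑ i, ∑ j, Q i j * S i j := by
  simp [Matrix.trace, Matrix.mul_apply, Matrix.diag]
  exact Finset.sum_congr rfl fun i _ => Finset.sum_congr rfl fun j _ => by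
    rw [hS.apply i j]

lemma frob_sq_mul_le (h : M3) :
    ∑ i, ∑ j, ((h*h) i j)^2 ≤ (∑ i, ∑ j, (h i j)^2)^2 := by
  have step : ∀ i j : Fin 3, ((h*h) i j)^2 ≤ (∑ k, (h i k)^2) * (∑ k, (h k j)^2) := by
    intro i j
    have := Finset.sum_mul_sq_le_sq_mul_sq Finset.univ (fun k => h i k) (fun k => h k j)
    simpa [Matrix.mul_apply] using this
  calc ∑ i, ∑ j, ((h*h) i j)^2
      ≤ ∑ i, ∑ j, (∑ k, (h i k)^2) * (∑ k, (h k j)^2) := by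
        exact Finset.sum_le_sum fun i _ => Finset.sum_le_sum fun j _ => step i j
    _ = (∑ i, ∑ k, (h i k)^2) * (∑ j, ∑ k, (h k j)^2) := by
        rw [Finset.sum_mul_sum]
    _ = (∑ i, ∑ j, (h i j)^2)^2 := by
        rw [Finset.sum_comm (f := fun k j => (h k j)^2)]; ring

lemma key_bound (Q h : M3) (hQ : Q.IsSymm) (hh : h.IsSymm) {M : ℝ} (hM : 0 ≤ M)
    (hb : (Q*Q).trace ≤ M^2) : (Q*(h*h)).trace ≤ M * (h*h).trace := by
  have hS : (h*h).IsSymm := by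
    unfold Matrix.IsSymm at *
    rw [Matrix.transpose_mul, hh]
  have e1 : (Q*(h*h)).trace = ∑ i, ∑ j, Q i j * (h*h) i j := trace_mul_symm_eq Q (h*h) hS
  have eQ : (Q*Q).trace = ∑ i, ∑ j, (Q i j)^2 := trace_sq_eq Q hQ
  have eh : (h*h).trace = ∑ i, ∑ j, (h i j)^2 := trace_sq_eq h hh
  have hF : 0 ≤ (h*h).trace := trace_sq_nonneg h hh
  have cs : (∑ i, ∑ j, Q i j * (h*h) i j)^2
      ≤ (∑ i, ∑ j, (Q i j)^2) * (∑ i, ∑ j, ((h*h) i j)^2) := by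
    have := Finset.sum_mul_sq_le_sq_mul_sq Finset.univ
      (fun p : Fin 3 × Fin 3 => Q p.1 p.2) (fun p : Fin 3 × Fin 3 => (h*h) p.1 p.2)
    simpa [Finset.sum_product, ← Finset.sum_product' ] using this
  have h2 : (∑ i, ∑ j, ((h*h) i j)^2) ≤ ((h*h).trace)^2 := by
    rw [eh]; exact frob_sq_mul_le h
  have hQ2 : (∑ i, ∑ j, (Q i j)^2) ≤ M^2 := by rw [← eQ]; exact hb
  have sqb : ((Q*(h*h)).trace)^2 ≤ (M * (h*h).trace)^2 := by
    rw [e1]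
    calc (∑ i, ∑ j, Q i j * (h*h) i j)^2
        ≤ (∑ i, ∑ j, (Q i j)^2) * (∑ i, ∑ j, ((h*h) i j)^2) := cs
      _ ≤ M^2 * ((h*h).trace)^2 := by
          apply mul_le_mul hQ2 h2 (by positivity) (by positivity)
      _ = (M * (h*h).trace)^2 := by ring
  nlinarith [mul_nonneg hM hF]

lemma cont_gradsq (Qf : (Fin 3 → ℝ) → M3) (hr : ∀ i j, ContDiff ℝ 1 fun y => Qf y i j) :
    Continuous (gradsq Qf) := by
  unfold gradsq
  refine continuous_finset_sum _ fun k _ => continuous_finset_sum _ fun i _ =>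
    continuous_finset_sum _ fun j _ => ?_
  exact (((hr i j).continuous_fderiv one_ne_zero).clm_apply continuous_const).pow 2

lemma cont_Fbred (A B C : ℝ) (Qf : (Fin 3 → ℝ) → M3)
    (hr : ∀ i j, ContDiff ℝ 1 fun y => Qf y i j) :
    Continuous fun x => Fbred A B C (Qf x) := by
  have hQ : Continuous Qf := continuous_matrix fun i j => (hr i j).continuous
  have h2 : Continuous fun x => (Qf x * Qf x).trace := (hQ.matrix_mul hQ).matrix_trace
  have h3 : Continuous fun x => (Qf x * Qf x * Qf x).trace :=
    ((hQ.matrix_mul hQ).matrix_mul hQ).matrix_trace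
  unfold Fbred
  continuity

lemma integrableOn_of_continuous {Ω : Set (Fin 3 → ℝ)} (hΩb : Bornology.IsBounded Ω)
    (f : (Fin 3 → ℝ) → ℝ) (hf : Continuous f) :
    MeasureTheory.IntegrableOn f Ω MeasureTheory.volume := by
  have := (hf.continuousOn.integrableOn_compact (μ := MeasureTheory.volume) hΩb.isCompact_closure)
  exact this.mono_set subset_closure

lemma gradsq_cdiff (Qf hf : (Fin 3 → ℝ) → M3)
    (hQreg : ∀ i j, ContDiff ℝ 1 fun y => Qf y i j)
    (hhreg : ∀ i j, ContDiff ℝ 1 fun y => hf y i j) (x : Fin 3 → ℝ) :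
    gradsq (fun y => Qf y + hf y) x + gradsq (fun y => Qf y - hf y) x
      - 2 * gradsq Qf x = 2 * gradsq hf x := by
  unfold gradsq
  have key : ∀ k i j : Fin 3,
      (fderiv ℝ (fun y => (Qf y + hf y) i j) x (Pi.single k 1))^2
    + (fderiv ℝ (fun y => (Qf y - hf y) i j) x (Pi.single k 1))^2
    - 2*(fderiv ℝ (fun y => Qf y i j) x (Pi.single k 1))^2
    = 2*(fderiv ℝ (fun y => hf y i j) x (Pi.single k 1))^2 := by
    intro k i j
    have dQ : DifferentiableAt ℝ (fun y => Qf y i j) x := ((hQreg i j).differentiable one_ne_zero) x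
    have dh : DifferentiableAt ℝ (fun y => hf y i j) x := ((hhreg i j).differentiable one_ne_zero) x
    have e1 : (fun y => (Qf y + hf y) i j) = fun y => Qf y i j + hf y i j := rfl
    have e2 : (fun y => (Qf y - hf y) i j) = fun y => Qf y i j - hf y i j := rfl
    rw [e1, e2, fderiv_fun_add dQ dh, fderiv_fun_sub dQ dh]
    simp only [ContinuousLinearMap.add_apply, ContinuousLinearMap.sub_apply]
    ring
  simp only [← Finset.sum_add_distrib, Finset.mul_sum, ← Finset.sum_sub_distrib]
  exact Finset.sum_congr rfl fun k _ => Finset.sum_congr rfl fun i _ =>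
    Finset.sum_congr rfl fun j _ => key k i j

lemma bulk_pointwise (A B C M : ℝ) (hC : 0 < C) (hB : 0 < B) (hM : 0 < M)
    (Q h : M3) (hQs : Q.IsSymm) (hhs : h.IsSymm)
    (hb : (Q*Q).trace ≤ M^2) :
    - ((|A| / C + 2 * B * M / C) * (h*h).trace)
      ≤ Fbred A B C (Q+h) + Fbred A B C (Q-h) - 2 * Fbred A B C Q := by
  rw [Fbred_cdiff]
  have ha : 0 ≤ (Q*Q).trace := trace_sq_nonneg Q hQs
  have hc : 0 ≤ (h*h).trace := trace_sq_nonneg h hhs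
  have hd := key_bound Q h hQs hhs hM.le hb
  have h1 : 0 ≤ A / C * (h*h).trace + |A| / C * (h*h).trace := by
    have e : A / C * (h*h).trace + |A| / C * (h*h).trace = (A + |A|)/C * (h*h).trace := by ring
    rw [e]
    exact mul_nonneg (div_nonneg (by linarith [neg_abs_le A]) hC.le) hc
  have h2 : 0 ≤ 2 * B * M / C * (h*h).trace - 2*B/C * (Q*(h*h)).trace := by
    have e : 2 * B * M / C * (h*h).trace - 2*B/C * (Q*(h*h)).trace
        = 2*B/C * (M*(h*h).trace - (Q*(h*h)).trace) := by ring
    rw [e]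
    exact mul_nonneg (by positivity) (by linarith)
  linarith [sq_nonneg ((Q*h).trace), mul_nonneg ha hc, sq_nonneg ((h*h).trace)]

open MeasureTheory

/-- Convexity estimate: for `Q` in `X = {‖Q‖_{L∞} ≤ M}` (Frobenius norm, pointwise on `Ω`)
and any `h`, both valued in the symmetric traceless matrices, the second-order central
difference of `E` satisfies
`E[Q+h] + E[Q−h] − 2E[Q] ≥ ∫_Ω |∇h|² − λ²(|A|/C + 2BM/C) ∫_Ω |h|²`. -/
theorem stmt6 (Ω : Set (Fin 3 → ℝ)) (hΩm : MeasurableSet Ω)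
    (hΩb : Bornology.IsBounded Ω)
    (A B C lam M : ℝ) (hC : 0 < C) (hB : 0 < B) (hlam : 0 < lam) (hM : 0 < M)
    (Qf hf : (Fin 3 → ℝ) → Matrix (Fin 3) (Fin 3) ℝ)
    (hQreg : ∀ i j, ContDiff ℝ 1 fun y => Qf y i j)
    (hhreg : ∀ i j, ContDiff ℝ 1 fun y => hf y i j)
    (hQS : ∀ x, (Qf x).IsSymm ∧ (Qf x).trace = 0)
    (hhS : ∀ x, (hf x).IsSymm ∧ (hf x).trace = 0)
    (hQbd : ∀ x ∈ Ω, Real.sqrt ((Qf x * Qf x).trace) ≤ M) :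
    (∫ x in Ω, gradsq hf x)
        - lam ^ 2 * (|A| / C + 2 * B * M / C) * ∫ x in Ω, (hf x * hf x).trace
      ≤ Eldg Ω lam A B C (fun x => Qf x + hf x)
          + Eldg Ω lam A B C (fun x => Qf x - hf x)
          - 2 * Eldg Ω lam A B C Qf := by
  have hregp : ∀ i j, ContDiff ℝ 1 fun y => (Qf y + hf y) i j :=
    fun i j => (hQreg i j).add (hhreg i j)
  have hregm : ∀ i j, ContDiff ℝ 1 fun y => (Qf y - hf y) i j :=
    fun i j => (hQreg i j).sub (hhreg i j)
  set K : ℝ := |A| / C + 2 * B * M / C with hK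
  set fp : (Fin 3 → ℝ) → ℝ := fun x =>
    (1/2) * gradsq (fun y => Qf y + hf y) x + lam^2 * Fbred A B C (Qf x + hf x) with hfp
  set fm : (Fin 3 → ℝ) → ℝ := fun x =>
    (1/2) * gradsq (fun y => Qf y - hf y) x + lam^2 * Fbred A B C (Qf x - hf x) with hfm
  set f0 : (Fin 3 → ℝ) → ℝ := fun x =>
    (1/2) * gradsq Qf x + lam^2 * Fbred A B C (Qf x) with hf0
  have hQcont : Continuous Qf := continuous_matrix fun i j => (hQreg i j).continuous
  have hhcont : Continuous hf := continuous_matrix fun i j => (hhreg i j).continuous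
  have contp : Continuous fp :=
    (continuous_const.mul (cont_gradsq _ hregp)).add
      (continuous_const.mul ((cont_Fbred A B C _ hregp)))
  have contm : Continuous fm :=
    (continuous_const.mul (cont_gradsq _ hregm)).add
      (continuous_const.mul ((cont_Fbred A B C _ hregm)))
  have cont0 : Continuous f0 :=
    (continuous_const.mul (cont_gradsq _ hQreg)).add
      (continuous_const.mul ((cont_Fbred A B C _ hQreg)))
  have contg : Continuous (gradsq hf) := cont_gradsq _ hhreg
  have contt : Continuous fun x => (hf x * hf x).trace :=
    (hhcont.matrix_mul hhcont).matrix_trace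
  have intp : IntegrableOn fp Ω volume := integrableOn_of_continuous hΩb fp contp
  have intm : IntegrableOn fm Ω volume := integrableOn_of_continuous hΩb fm contm
  have int0 : IntegrableOn f0 Ω volume := integrableOn_of_continuous hΩb f0 cont0
  have intg : IntegrableOn (gradsq hf) Ω volume := integrableOn_of_continuous hΩb _ contg
  have intt : IntegrableOn (fun x => (hf x * hf x).trace) Ω volume :=
    integrableOn_of_continuous hΩb _ contt
  have hRHS : Eldg Ω lam A B C (fun x => Qf x + hf x)
      + Eldg Ω lam A B C (fun x => Qf x - hf x) - 2 * Eldg Ω lam A B C Qf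
      = ∫ x in Ω, (fp x + fm x - 2 * f0 x) := by
    simp only [Eldg]
    have intpm : IntegrableOn (fun x => fp x + fm x) Ω volume := intp.add intm
    have int02 : IntegrableOn (fun x => 2 * f0 x) Ω volume := int0.const_mul 2
    rw [integral_sub intpm int02, integral_add intp intm, integral_const_mul]
  have hLHS : (∫ x in Ω, gradsq hf x) - lam ^ 2 * K * ∫ x in Ω, (hf x * hf x).trace
      = ∫ x in Ω, (gradsq hf x - lam^2 * K * (hf x * hf x).trace) := by
    have inttK : IntegrableOn (fun x => lam^2 * K * (hf x * hf x).trace) Ω volume :=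
      intt.const_mul _
    rw [integral_sub intg inttK, integral_const_mul]
  rw [hRHS, hLHS]
  apply setIntegral_mono_on
  · exact intg.sub (intt.const_mul _)
  · exact (intp.add intm).sub (int0.const_mul 2)
  · exact hΩm
  · intro x hx
    have hg := gradsq_cdiff Qf hf hQreg hhreg x
    have hQsym := (hQS x).1
    have hhsym := (hhS x).1
    have ha : 0 ≤ (Qf x * Qf x).trace := trace_sq_nonneg _ hQsym
    have hb2 : (Qf x * Qf x).trace ≤ M^2 := by
      calc (Qf x * Qf x).trace = Real.sqrt ((Qf x * Qf x).trace) ^ 2 :=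
            (Real.sq_sqrt ha).symm
        _ ≤ M^2 := pow_le_pow_left₀ (Real.sqrt_nonneg _) (hQbd x hx) 2
    have hbulk := bulk_pointwise A B C M hC hB hM (Qf x) (hf x) hQsym hhsym hb2
    simp only [hfp, hfm, hf0]
    have hlam2 : (0:ℝ) ≤ lam^2 := sq_nonneg lam
    nlinarith [mul_le_mul_of_nonneg_left hbulk hlam2]
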